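/- Let q be even, ψ a nontrivial additive character of F_q, and ε : F_q → {±1} the character with kernel the image of x ↦ x² + x. For a, b, c ∈ F_q, the sum of ψ(-ax - by - cz) over triples (x,y,z) ∈ F_q³ with y² ≠ xz and (x,z) ≠ (0,0) equals: (q-1)(q²-1) if a = b = c = 0; -q + 1 if b = 0 and (a,c) ≠ (0,0); -q + 1 if b ≠ 0 and ε(ac b⁻²) = 1; and q + 1 if b ≠ 0 and ε(ac b⁻²) = -1. -/

import Mathlib

open scoped Classical
open Finset AddChar

private lemma aux_hsum {F : Type*} [Field F] [Fintype F] (ψ : AddChar F ℂ) (hψ : ψ ≠ 1) (d : F) :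
    ∑ x : F, ψ (d * x) = if d = 0 then (Fintype.card F : ℂ) else 0 := by
  simp_rw [mul_comm d]
  exact_mod_cast AddChar.sum_mulShift d (AddChar.IsPrimitive.of_ne_one hψ)

private lemma aux_sq_bij {F : Type*} [Field F] [Fintype F] [CharP F 2] :
    Function.Bijective (fun x : F => x ^ 2) := by
  refine Finite.injective_iff_bijective.mp fun x y h => ?_
  have h0 : (x + y) ^ 2 = 0 := by rw [CharTwo.add_sq, h, CharTwo.add_self_eq_zero]
  have := pow_eq_zero_iff (n := 2) (by norm_num) |>.mp h0
  linear_combination this - CharTwo.add_self_eq_zero y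

private lemma aux_eps_zero {F : Type*} [Field F] (ε : F → ℤ)
    (hεker : ∀ x : F, ε x = 1 ↔ ∃ t : F, t ^ 2 + t = x) : ε 0 = 1 :=
  (hεker 0).mpr ⟨0, by ring⟩

private lemma aux_exists_neg {F : Type*} [Field F] [Fintype F] [CharP F 2] (ε : F → ℤ)
    (hεker : ∀ x : F, ε x = 1 ↔ ∃ t : F, t ^ 2 + t = x)
    (hεval : ∀ x : F, ε x = 1 ∨ ε x = -1) : ∃ x : F, ε x = -1 := by
  have hni : ¬ Function.Injective (fun t : F => t ^ 2 + t) := by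
    intro h
    have h01 : (fun t : F => t ^ 2 + t) 0 = (fun t : F => t ^ 2 + t) 1 := by
      simp [CharTwo.add_self_eq_zero]
    exact one_ne_zero (h h01).symm
  have hns : ¬ Function.Surjective (fun t : F => t ^ 2 + t) := by
    rwa [← Finite.injective_iff_surjective]
  rw [Function.Surjective] at hns
  push_neg at hns
  obtain ⟨x, hx⟩ := hns
  refine ⟨x, ?_⟩
  rcases hεval x with h | h
  · exact absurd ((hεker x).mp h) (by simpa using hx)
  · exact h

private lemma aux_sum_eps {F : Type*} [Field F] [Fintype F] [CharP F 2] (ε : F → ℤ)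
    (hεhom : ∀ x y : F, ε (x + y) = ε x * ε y)
    (hεker : ∀ x : F, ε x = 1 ↔ ∃ t : F, t ^ 2 + t = x)
    (hεval : ∀ x : F, ε x = 1 ∨ ε x = -1) : ∑ x : F, (ε x : ℂ) = 0 := by
  obtain ⟨x0, hx0⟩ := aux_exists_neg ε hεker hεval
  have key : ∑ x : F, (ε x : ℂ) = -∑ x : F, (ε x : ℂ) := by
    calc ∑ x : F, (ε x : ℂ) = ∑ x : F, (ε (x0 + x) : ℂ) :=
          (Fintype.sum_equiv (Equiv.addLeft x0) _ _ fun x => rfl).symm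
      _ = -∑ x : F, (ε x : ℂ) := by
          simp [hεhom, hx0, neg_mul, ← Finset.sum_neg_distrib]
  have h2 : (2:ℂ) * ∑ x : F, (ε x : ℂ) = 0 := by linear_combination key
  simpa using h2

private lemma aux_fiber {F : Type*} [Field F] [Fintype F] [CharP F 2] (ε : F → ℤ)
    (hεker : ∀ x : F, ε x = 1 ↔ ∃ t : F, t ^ 2 + t = x)
    (hεval : ∀ x : F, ε x = 1 ∨ ε x = -1) (x : F) :
    ((univ.filter fun w : F => w ^ 2 + w = x).card : ℂ) = 1 + (ε x : ℂ) := by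
  have h2 : (2 : F) = 0 := CharTwo.two_eq_zero
  rcases hεval x with h | h
  · obtain ⟨t, ht⟩ := (hεker x).mp h
    have he : (univ.filter fun w : F => w ^ 2 + w = x) = {t, t + 1} := by
      ext w
      simp only [mem_filter, mem_univ, true_and, mem_insert, mem_singleton]
      constructor
      · intro hw
        have hs : (w + t) * (w + t + 1) = 0 := by
          linear_combination hw - ht + (t ^ 2 + t + w * t) * h2
        rcases mul_eq_zero.mp hs with h0 | h0
        · left; linear_combination h0 - t * h2
        · right; linear_combination h0 - (t + 1) * h2
      · rintro (rfl | rfl)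
        · exact ht
        · linear_combination ht + (t + 1) * h2
    rw [he, h]
    have ht1 : t ∉ ({t + 1} : Finset F) := by
      simp only [mem_singleton]
      intro hh; exact one_ne_zero (by linear_combination -hh)
    rw [Finset.card_insert_of_notMem ht1]
    norm_num
  · have he : (univ.filter fun w : F => w ^ 2 + w = x) = ∅ := by
      ext w
      simp only [mem_filter, mem_univ, true_and, Finset.notMem_empty, iff_false]
      intro hw
      have : ε x = 1 := (hεker x).mpr ⟨w, hw⟩
      omega
    rw [he, h]; norm_num

private lemma aux_fiber_sum {F : Type*} [Field F] [Fintype F] (f : F → ℂ) (g : F → F) :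
    ∑ w : F, f (g w) = ∑ x : F, ((univ.filter fun w : F => g w = x).card : ℂ) * f x := by
  rw [← Finset.sum_fiberwise univ g (fun w => f (g w))]
  refine Finset.sum_congr rfl fun x _ => ?_
  rw [Finset.sum_congr rfl (fun w hw => by rw [(mem_filter.mp hw).2]), Finset.sum_const,
    nsmul_eq_mul]

private lemma aux_gswap {F : Type*} [Field F] [Fintype F] [CharP F 2]
    (ψ : AddChar F ℂ) (hψ : ψ ≠ 1) (ε : F → ℤ)
    (hεhom : ∀ x y : F, ε (x + y) = ε x * ε y) (d : F) :
    ∑ s : F, ψ (d * s) * ∑ x : F, (ε x : ℂ) * ψ (s * x) = (Fintype.card F : ℂ) * ε d := by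
  have h2 : (2 : F) = 0 := CharTwo.two_eq_zero
  have step1 : ∀ s : F, ψ (d * s) * ∑ x : F, (ε x : ℂ) * ψ (s * x)
      = ∑ x : F, (ε x : ℂ) * ψ ((d + x) * s) := by
    intro s
    rw [Finset.mul_sum]
    refine Finset.sum_congr rfl fun x _ => ?_
    rw [add_mul, AddChar.map_add_eq_mul, mul_comm s x]
    ring
  simp_rw [step1]
  rw [Finset.sum_comm]
  have step2 : ∀ x : F, ∑ s : F, (ε x : ℂ) * ψ ((d + x) * s)
      = (ε x : ℂ) * (if d + x = 0 then (Fintype.card F : ℂ) else 0) := by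
    intro x
    rw [← Finset.mul_sum, aux_hsum ψ hψ]
  simp_rw [step2]
  have hiff : ∀ w : F, (d + w = 0) ↔ (w = d) := fun w =>
    ⟨fun h0 => by linear_combination h0 - d * h2, fun hw => by rw [hw]; linear_combination d * h2⟩
  simp_rw [hiff, mul_ite, mul_zero]
  rw [Finset.sum_ite_eq' univ d (fun x => (ε x : ℂ) * (Fintype.card F : ℂ))]
  simp [mul_comm]

private lemma aux_sq_sum {F : Type*} [Field F] [Fintype F] [CharP F 2]
    (ψ : AddChar F ℂ) (hψ : ψ ≠ 1) (a : F) :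
    ∑ u : F, ψ (a * u ^ 2) = if a = 0 then (Fintype.card F : ℂ) else 0 := by
  calc ∑ u : F, ψ (a * u ^ 2) = ∑ x : F, ψ (a * x) :=
        Fintype.sum_bijective _ (aux_sq_bij (F := F)) _ (fun x => ψ (a * x)) (fun u => rfl)
    _ = _ := aux_hsum ψ hψ a

private lemma aux_T0 {F : Type*} [Field F] [Fintype F] [CharP F 2]
    (ψ : AddChar F ℂ) (hψ : ψ ≠ 1) (a c : F) :
    ∑ u : F, ∑ v : F, ψ (a * u ^ 2 + c * v ^ 2)
      = (if a = 0 then (Fintype.card F : ℂ) else 0) *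
        (if c = 0 then (Fintype.card F : ℂ) else 0) := by
  calc ∑ u : F, ∑ v : F, ψ (a * u ^ 2 + c * v ^ 2)
      = ∑ u : F, ∑ v : F, ψ (a * u ^ 2) * ψ (c * v ^ 2) := by
        simp_rw [AddChar.map_add_eq_mul]
    _ = (∑ u : F, ψ (a * u ^ 2)) * (∑ v : F, ψ (c * v ^ 2)) := by
        rw [Finset.sum_mul_sum]
    _ = _ := by rw [aux_sq_sum ψ hψ a, aux_sq_sum ψ hψ c]

private lemma aux_T {F : Type*} [Field F] [Fintype F] [CharP F 2]
    (ψ : AddChar F ℂ) (hψ : ψ ≠ 1) (ε : F → ℤ)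
    (hεhom : ∀ x y : F, ε (x + y) = ε x * ε y)
    (hεker : ∀ x : F, ε x = 1 ↔ ∃ t : F, t ^ 2 + t = x)
    (hεval : ∀ x : F, ε x = 1 ∨ ε x = -1)
    (a b c : F) (hb : b ≠ 0) :
    ∑ u : F, ∑ v : F, ψ (a * u ^ 2 + b * (u * v) + c * v ^ 2)
      = (Fintype.card F : ℂ) * ε (a * c / b ^ 2) := by
  set q : ℂ := (Fintype.card F : ℂ) with hq
  set G : F → ℂ := fun s => ∑ x : F, (ε x : ℂ) * ψ (s * x) with hG
  rw [Finset.sum_comm]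
  rcases eq_or_ne a 0 with rfl | ha
  · -- a = 0 case
    have harg : ∀ u v : F, (0:F) * u ^ 2 + b * (u * v) + c * v ^ 2
        = c * v ^ 2 + (b * v) * u := by intros; ring
    simp_rw [harg, AddChar.map_add_eq_mul, ← Finset.mul_sum, aux_hsum ψ hψ]
    have hbv : ∀ v : F, (b * v = 0) ↔ (v = 0) := by
      intro v; simp [hb]
    simp_rw [hbv, mul_ite, mul_zero]
    rw [Finset.sum_ite_eq' univ (0:F) (fun v => ψ (c * v ^ 2) * q)]
    have h0 : (0:F) * c / b ^ 2 = 0 := by simp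
    rw [h0, aux_eps_zero ε hεker]
    simp
  · -- a ≠ 0 case
    have sum_eps := aux_sum_eps ε hεhom hεker hεval
    have hv : ∀ v : F, ∑ u : F, ψ (a * u ^ 2 + b * (u * v) + c * v ^ 2)
        = ψ (c * v ^ 2) * G (b ^ 2 * v ^ 2 / a) := by
      intro v
      rcases eq_or_ne v 0 with rfl | hv0
      · have harg : ∀ u : F, a * u ^ 2 + b * (u * 0) + c * 0 ^ 2 = a * u ^ 2 := by
          intros; ring
        simp_rw [harg, aux_sq_sum ψ hψ a, if_neg ha]
        have : G (b ^ 2 * 0 ^ 2 / a) = 0 := by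
          have h00 : b ^ 2 * (0:F) ^ 2 / a = 0 := by ring_nf
          rw [h00, hG]
          simp_rw [zero_mul, AddChar.map_zero_eq_one, mul_one]
          exact sum_eps
        rw [this, mul_zero]
      · have hr : b * v / a ≠ 0 := by
          apply div_ne_zero (mul_ne_zero hb hv0) ha
        have hrbij : Function.Bijective (fun w : F => (b * v / a) * w) := by
          constructor
          · exact mul_right_injective₀ hr
          · intro y; exact ⟨y / (b * v / a), by field_simp⟩
        have hsub : ∑ w : F, ψ ((b ^ 2 * v ^ 2 / a) * (w ^ 2 + w) + c * v ^ 2)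
            = ∑ u : F, ψ (a * u ^ 2 + b * (u * v) + c * v ^ 2) := by
          refine Fintype.sum_bijective _ hrbij _ _ fun w => ?_
          congr 1
          field_simp
        rw [← hsub]
        have hlam : b ^ 2 * v ^ 2 / a ≠ 0 :=
          div_ne_zero (mul_ne_zero (pow_ne_zero 2 hb) (pow_ne_zero 2 hv0)) ha
        set lam : F := b ^ 2 * v ^ 2 / a with hlamdef
        calc ∑ w : F, ψ (lam * (w ^ 2 + w) + c * v ^ 2)
            = ∑ w : F, ψ (lam * (w ^ 2 + w)) * ψ (c * v ^ 2) := by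
              simp_rw [AddChar.map_add_eq_mul]
          _ = (∑ w : F, ψ (lam * (w ^ 2 + w))) * ψ (c * v ^ 2) := by
              rw [Finset.sum_mul]
          _ = ψ (c * v ^ 2) * G lam := by
              rw [mul_comm]
              congr 1
              have := aux_fiber_sum (fun x => ψ (lam * x)) (fun w : F => w ^ 2 + w)
              rw [this]
              simp_rw [aux_fiber ε hεker hεval, add_mul, one_mul]
              rw [Finset.sum_add_distrib, aux_hsum ψ hψ lam, if_neg hlam, zero_add, hG]
      -- end v ≠ 0
    simp_rw [hv]
    have habij : Function.Bijective (fun s : F => (a / b ^ 2) * s) := by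
      constructor
      · exact mul_right_injective₀ (div_ne_zero ha (pow_ne_zero 2 hb))
      · intro y; exact ⟨y / (a / b ^ 2), by field_simp⟩
    calc ∑ v : F, ψ (c * v ^ 2) * G (b ^ 2 * v ^ 2 / a)
        = ∑ x : F, ψ (c * x) * G (b ^ 2 * x / a) :=
          Fintype.sum_bijective _ (aux_sq_bij (F := F)) _
            (fun x => ψ (c * x) * G (b ^ 2 * x / a)) (fun v => rfl)
      _ = ∑ s : F, ψ ((a * c / b ^ 2) * s) * G s := by
          refine (Fintype.sum_bijective _ habij _ _ fun s => ?_).symm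
          congr 2
          · field_simp
          · field_simp
      _ = q * ε (a * c / b ^ 2) := by
          rw [hG]
          exact aux_gswap ψ hψ ε hεhom (a * c / b ^ 2)

theorem stmt6 {F : Type*} [Field F] [Fintype F] (hq : Even (Fintype.card F))
    (ψ : AddChar F ℂ) (hψ : ψ ≠ 1)
    (ε : F → ℤ) (hεhom : ∀ x y : F, ε (x + y) = ε x * ε y)
    (hεker : ∀ x : F, ε x = 1 ↔ ∃ t : F, t ^ 2 + t = x)
    (hεval : ∀ x : F, ε x = 1 ∨ ε x = -1)
    (a b c : F) :
    (∑ x : F, ∑ y : F, ∑ z : F,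
        if y ^ 2 ≠ x * z ∧ (x, z) ≠ ((0 : F), (0 : F))
        then ψ (-(a * x) - b * y - c * z) else 0) =
      if a = 0 ∧ b = 0 ∧ c = 0 then
        ((Fintype.card F : ℂ) - 1) * ((Fintype.card F : ℂ) ^ 2 - 1)
      else if b = 0 ∧ (a, c) ≠ ((0 : F), (0 : F)) then -(Fintype.card F : ℂ) + 1
      else if ε (a * c / b ^ 2) = 1 then -(Fintype.card F : ℂ) + 1
      else (Fintype.card F : ℂ) + 1 := by
  haveI : CharP F 2 := by
    have h : ringChar F = 2 := FiniteField.even_card_iff_char_two.mpr (Nat.even_iff.mp hq)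
    rw [← h]; exact ringChar.charP F
  set q : ℂ := (Fintype.card F : ℂ) with hqdef
  have hneg : ∀ x y z : F, -(a * x) - b * y - c * z = a * x + b * y + c * z := by
    intros x y z
    rw [CharTwo.sub_eq_add, CharTwo.sub_eq_add, CharTwo.neg_eq]
  simp_rw [hneg]
  -- pointwise decomposition
  have hpt : ∀ x y z : F,
      (if y ^ 2 ≠ x * z ∧ (x, z) ≠ ((0:F),(0:F)) then ψ (a*x + b*y + c*z) else 0)
      = ψ (a*x + b*y + c*z)
        - (if y ^ 2 = x * z then ψ (a*x + b*y + c*z) else 0)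
        - (if z = 0 ∧ x = 0 then ψ (a*x + b*y + c*z) else 0)
        + (if z = 0 ∧ x = 0 ∧ y = 0 then ψ (a*x + b*y + c*z) else 0) := by
    intro x y z
    have hprod : ((x, z) ≠ ((0:F),(0:F))) ↔ ¬(x = 0 ∧ z = 0) := by
      simp [Prod.ext_iff]
    by_cases hxz : x = 0 ∧ z = 0
    · obtain ⟨rfl, rfl⟩ := hxz
      by_cases hy : y = 0
      · subst hy; simp [hprod]
      · have hy2 : y ^ 2 ≠ (0:F) * 0 := by
          simpa [pow_eq_zero_iff] using hy
        simp [hprod, hy2, hy]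
    · have hx' : ¬(z = 0 ∧ x = 0) := fun h => hxz ⟨h.2, h.1⟩
      have hx'' : ¬(z = 0 ∧ x = 0 ∧ y = 0) := fun h => hxz ⟨h.2.1, h.1⟩
      by_cases hy2 : y ^ 2 = x * z
      · rw [if_neg (fun h => h.1 hy2), if_pos hy2, if_neg hx', if_neg hx'']
        ring
      · rw [if_pos ⟨hy2, hprod.mpr hxz⟩, if_neg hy2, if_neg hx', if_neg hx'']
        ring
  simp_rw [hpt, Finset.sum_add_distrib, Finset.sum_sub_distrib]
  -- Σ1
  have h1 : ∑ x : F, ∑ y : F, ∑ z : F, ψ (a*x + b*y + c*z)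
      = (if a = 0 then q else 0) * (if b = 0 then q else 0) * (if c = 0 then q else 0) := by
    have e1 : ∀ x y : F, ∑ z : F, ψ (a*x + b*y + c*z)
        = ψ (a*x + b*y) * (if c = 0 then q else 0) := by
      intro x y
      rw [show (∑ z : F, ψ (a*x + b*y + c*z)) = ∑ z : F, ψ (a*x + b*y) * ψ (c*z) from
        Finset.sum_congr rfl fun z _ => by rw [AddChar.map_add_eq_mul],
        ← Finset.mul_sum, aux_hsum ψ hψ c]
    have e2 : ∀ x : F, ∑ y : F, ψ (a*x + b*y) = ψ (a*x) * (if b = 0 then q else 0) := by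
      intro x
      rw [show (∑ y : F, ψ (a*x + b*y)) = ∑ y : F, ψ (a*x) * ψ (b*y) from
        Finset.sum_congr rfl fun y _ => by rw [AddChar.map_add_eq_mul],
        ← Finset.mul_sum, aux_hsum ψ hψ b]
    simp_rw [e1, ← Finset.sum_mul, e2, ← Finset.sum_mul, aux_hsum ψ hψ a]
    rfl
  -- Σ2
  have h2 : ∑ x : F, ∑ y : F, ∑ z : F, (if y ^ 2 = x * z then ψ (a*x + b*y + c*z) else 0)
      = ∑ u : F, ∑ v : F, ψ (a * u ^ 2 + b * (u * v) + c * v ^ 2) := by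
    set e : F ≃ F := Equiv.ofBijective _ (aux_sq_bij (F := F)) with he
    have hsq : ∀ y : F, e y = y ^ 2 := fun y => rfl
    have step1 : ∀ x z : F, ∑ y : F, (if y ^ 2 = x * z then ψ (a*x + b*y + c*z) else 0)
        = ψ (a*x + b * (e.symm (x*z)) + c*z) := by
      intro x z
      have hcond : ∀ y : F, (y ^ 2 = x * z) ↔ (y = e.symm (x*z)) := by
        intro y
        rw [← hsq y, ← Equiv.eq_symm_apply]
      simp_rw [hcond]
      rw [Finset.sum_ite_eq' univ (e.symm (x*z)) (fun y => ψ (a*x + b*y + c*z))]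
      simp
    calc ∑ x : F, ∑ y : F, ∑ z : F, (if y ^ 2 = x * z then ψ (a*x + b*y + c*z) else 0)
        = ∑ x : F, ∑ z : F, ∑ y : F, (if y ^ 2 = x * z then ψ (a*x + b*y + c*z) else 0) := by
          exact Finset.sum_congr rfl fun x _ => Finset.sum_comm
      _ = ∑ x : F, ∑ z : F, ψ (a*x + b * (e.symm (x*z)) + c*z) := by
          simp_rw [step1]
      _ = ∑ u : F, ∑ v : F, ψ (a * u ^ 2 + b * (u * v) + c * v ^ 2) := by
          have hsymm : ∀ u v : F, e.symm (u ^ 2 * v ^ 2) = u * v := fun u v => by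
            rw [Equiv.symm_apply_eq, hsq, mul_pow]
          refine (Fintype.sum_bijective _ (aux_sq_bij (F := F)) _ _ fun u => ?_).symm
          refine Fintype.sum_bijective _ (aux_sq_bij (F := F)) _ _ fun v => ?_
          rw [hsymm u v]
  -- Σ3
  have h3 : ∑ x : F, ∑ y : F, ∑ z : F, (if z = 0 ∧ x = 0 then ψ (a*x + b*y + c*z) else 0)
      = if b = 0 then q else 0 := by
    simp_rw [ite_and, Finset.sum_ite_eq' univ (0:F), mem_univ, if_true,
      Finset.sum_ite_irrel, Finset.sum_const_zero, Finset.sum_ite_eq' univ (0:F), mem_univ,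
      if_true]
    rw [show (∑ y : F, ψ (a * 0 + b * y + c * 0)) = ∑ y : F, ψ (b * y) from
      Finset.sum_congr rfl fun y _ => by ring_nf, aux_hsum ψ hψ b]
  -- Σ4
  have h4 : ∑ x : F, ∑ y : F, ∑ z : F, (if z = 0 ∧ x = 0 ∧ y = 0 then ψ (a*x + b*y + c*z) else 0)
      = 1 := by
    simp_rw [ite_and, Finset.sum_ite_eq' univ (0:F), mem_univ, if_true,
      Finset.sum_ite_irrel, Finset.sum_const_zero, Finset.sum_ite_eq' univ (0:F), mem_univ,
      if_true]
    rw [show a * 0 + b * 0 + c * 0 = (0:F) from by ring, AddChar.map_zero_eq_one]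
  rw [h1, h2, h3, h4]
  have hprod2 : ((a, c) ≠ ((0:F),(0:F))) ↔ ¬(a = 0 ∧ c = 0) := by simp [Prod.ext_iff]
  by_cases hb : b = 0
  · subst hb
    have hT : ∑ u : F, ∑ v : F, ψ (a * u ^ 2 + (0:F) * (u * v) + c * v ^ 2)
        = (if a = 0 then q else 0) * (if c = 0 then q else 0) := by
      rw [show (∑ u : F, ∑ v : F, ψ (a * u ^ 2 + (0:F) * (u * v) + c * v ^ 2))
          = ∑ u : F, ∑ v : F, ψ (a * u ^ 2 + c * v ^ 2) from
        Finset.sum_congr rfl fun u _ => Finset.sum_congr rfl fun v _ => by ring_nf]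
      exact aux_T0 ψ hψ a c
    rw [hT]
    by_cases hac : a = 0 ∧ c = 0
    · obtain ⟨rfl, rfl⟩ := hac
      simp only [if_pos rfl, if_pos (⟨rfl, rfl, rfl⟩ : (0:F) = 0 ∧ (0:F) = 0 ∧ (0:F) = 0)]
      simp
      ring
    · have hC : ¬(a = 0 ∧ (0:F) = 0 ∧ c = 0) := fun hh => hac ⟨hh.1, hh.2.2⟩
      have hD : ((0:F) = 0 ∧ (a, c) ≠ ((0:F),(0:F))) := ⟨rfl, hprod2.mpr hac⟩
      rcases not_and_or.mp hac with h | h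
      · simp [hac, hprod2.mpr hac, h]
      · simp [hac, hprod2.mpr hac, h]
  · have hT := aux_T ψ hψ ε hεhom hεker hεval a b c hb
    rw [hT]
    have hC1 : ¬(a = 0 ∧ b = 0 ∧ c = 0) := fun hh => hb hh.2.1
    have hC2 : ¬(b = 0 ∧ (a, c) ≠ ((0:F),(0:F))) := fun hh => hb hh.1
    simp only [if_neg hb, if_neg hC1, if_neg hC2]
    rcases hεval (a * c / b ^ 2) with h | h
    · rw [if_pos h, h]
      push_cast
      ring
    · rw [if_neg (show ¬ ε (a * c / b ^ 2) = 1 by omega), h]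
      push_cast
      ring
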